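/- Let W be a nonzero finite-dimensional real normed vector space and T : W → W a linear map such that every eigenvalue of the complexification of T has modulus at most 1 and at least one eigenvalue has modulus exactly 1. Then there exist a natural number d and constants 0 < c₁ ≤ c₂ such that c₁ · n^d ≤ ‖Tⁿ‖ ≤ c₂ · n^d for all n ≥ 1, where ‖Tⁿ‖ is the operator norm. -/

import Mathlib

open Module Finset

set_option maxHeartbeats 1600000

private lemma sum_range_shrink {M : Type*} [AddCommMonoid M] {t : ℕ → M} {a b : ℕ}
    (ha : ∀ k, a ≤ k → t k = 0) (hb : ∀ k, b ≤ k → t k = 0) :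
    ∑ k ∈ Finset.range a, t k = ∑ k ∈ Finset.range b, t k := by
  rcases le_total a b with h | h
  · exact Finset.sum_subset (Finset.range_subset_range.2 h)
      (fun k _ hk => ha k (Nat.le_of_not_lt (by simpa using hk)))
  · exact (Finset.sum_subset (Finset.range_subset_range.2 h)
      (fun k _ hk => hb k (Nat.le_of_not_lt (by simpa using hk)))).symm

private lemma hasEigen_conj {V V' : Type*} [AddCommGroup V] [Module ℂ V] [AddCommGroup V']
    [Module ℂ V'] (e : V ≃ₗ[ℂ] V') (A : Module.End ℂ V) (μ : ℂ)
    (h : Module.End.HasEigenvalue A μ) : Module.End.HasEigenvalue (e.conj A) μ := by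
  obtain ⟨v, hv⟩ := h.exists_hasEigenvector
  have hv1 : A v = μ • v := hv.apply_eq_smul
  have hv2 : v ≠ 0 := hv.2
  apply Module.End.hasEigenvalue_of_hasEigenvector (x := e v)
  refine ⟨Module.End.mem_eigenspace_iff.2 ?_, fun h0 => hv2 (e.map_eq_zero_iff.1 h0)⟩
  rw [LinearEquiv.conj_apply_apply, e.symm_apply_apply, hv1, map_smul]

private lemma conj_symm_conj {V V' : Type*} [AddCommGroup V] [Module ℂ V] [AddCommGroup V']
    [Module ℂ V'] (e : V ≃ₗ[ℂ] V') (A : Module.End ℂ V) :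
    e.symm.conj (e.conj A) = A := by
  ext x
  simp [LinearEquiv.conj_apply]

private lemma conj_pow_eq {V V' : Type*} [AddCommGroup V] [Module ℂ V] [AddCommGroup V']
    [Module ℂ V'] (e : V ≃ₗ[ℂ] V') (A : Module.End ℂ V) (n : ℕ) :
    e.conj (A ^ n) = (e.conj A) ^ n := by
  induction n with
  | zero =>
    rw [pow_zero, pow_zero, Module.End.one_eq_id, LinearEquiv.conj_id]
    rfl
  | succ n ih =>
    rw [pow_succ, pow_succ, Module.End.mul_eq_comp, Module.End.mul_eq_comp,
      LinearEquiv.conj_comp, ih]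

private lemma baseChange_injective (W : Type*) [AddCommGroup W] [Module ℝ W] :
    Function.Injective (fun h : W →ₗ[ℝ] W => h.baseChange ℂ) := by
  intro h1 h2 h12
  ext x
  have ret : ∀ y : W,
      (TensorProduct.lid ℝ W) ((LinearMap.rTensor W Complex.reLm) ((1 : ℂ) ⊗ₜ[ℝ] y)) = y := by
    intro y
    rw [LinearMap.rTensor_tmul, TensorProduct.lid_tmul]
    simp [Complex.reLm]
  have h1x := congrArg (fun (L : TensorProduct ℝ ℂ W →ₗ[ℂ] TensorProduct ℝ ℂ W) =>
    (TensorProduct.lid ℝ W) ((LinearMap.rTensor W Complex.reLm) (L ((1:ℂ) ⊗ₜ[ℝ] x)))) h12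
  simpa only [LinearMap.baseChange_tmul, ret] using h1x

private theorem core_growth {V : Type*} [NormedAddCommGroup V] [NormedSpace ℂ V]
    [FiniteDimensional ℂ V] (f : V →L[ℂ] V)
    (hle : ∀ μ : ℂ, Module.End.HasEigenvalue (f : V →ₗ[ℂ] V) μ → ‖μ‖ ≤ 1)
    (hone : ∃ μ : ℂ, Module.End.HasEigenvalue (f : V →ₗ[ℂ] V) μ ∧ ‖μ‖ = 1) :
    ∃ (d : ℕ) (c₁ c₂ : ℝ), 0 < c₁ ∧ 0 < c₂ ∧
      ∀ n : ℕ, 1 ≤ n → c₁ * (n : ℝ) ^ d ≤ ‖f ^ n‖ ∧ ‖f ^ n‖ ≤ c₂ * (n : ℝ) ^ d := by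
  classical
  set fl : Module.End ℂ V := (f : V →ₗ[ℂ] V) with hfl_def
  have happ : ∀ (n : ℕ) (x : V), (f ^ n) x = (fl ^ n) x := by
    intro n x
    induction n generalizing x with
    | zero => simp
    | succ n ih =>
      rw [pow_succ, ContinuousLinearMap.mul_apply, pow_succ, Module.End.mul_apply]
      exact ih (f x)
  set N : ℂ → Module.End ℂ V := fun μ => fl - μ • 1 with hN_def
  set E : ℂ → Submodule ℂ V := fun μ => fl.maxGenEigenspace μ with hE_def
  have hE_apply : ∀ μ, fl.maxGenEigenspace μ = E μ := fun μ => rfl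
  have hex : ∀ μ : ℂ, ∃ k : ℕ, ∀ x ∈ E μ, (N μ ^ k) x = 0 := by
    intro μ
    refine ⟨finrank ℂ V, fun x hx => ?_⟩
    have hx' : x ∈ fl.genEigenspace μ (finrank ℂ V) := by
      rw [← Module.End.maxGenEigenspace_eq_genEigenspace_finrank fl μ]; exact hx
    rw [Module.End.mem_genEigenspace_nat, LinearMap.mem_ker] at hx'
    exact hx'
  set m : ℂ → ℕ := fun μ => Nat.find (hex μ) with hm_def
  have hm_spec : ∀ μ, ∀ x ∈ E μ, (N μ ^ m μ) x = 0 := fun μ => Nat.find_spec (hex μ)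
  have hm_min : ∀ (μ : ℂ) (k : ℕ), k < m μ → ¬ (∀ x ∈ E μ, (N μ ^ k) x = 0) :=
    fun μ k hk => Nat.find_min (hex μ) hk
  have hm_zero : ∀ (μ : ℂ) (k : ℕ), m μ ≤ k → ∀ x ∈ E μ, (N μ ^ k) x = 0 := by
    intro μ k hk x hx
    have hsplit : N μ ^ k = N μ ^ (k - m μ) * N μ ^ m μ := by
      rw [← pow_add, Nat.sub_add_cancel hk]
    rw [hsplit, Module.End.mul_apply, hm_spec μ x hx, map_zero]
  have hexpand : ∀ (μ : ℂ) (n : ℕ), ∀ x ∈ E μ,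
      (fl ^ n) x = ∑ k ∈ Finset.range (m μ),
        (n.choose k : ℂ) • μ ^ (n - k) • ((N μ ^ k) x) := by
    intro μ n x hx
    have hcomm : Commute (N μ) (μ • (1 : Module.End ℂ V)) :=
      (Commute.one_right (N μ)).smul_right μ
    have h1 : fl = N μ + μ • 1 := by rw [hN_def]; simp
    have h2 : (fl ^ n) x
        = ∑ k ∈ Finset.range (n + 1), (n.choose k : ℂ) • μ ^ (n - k) • ((N μ ^ k) x) := by
      conv_lhs => rw [h1, hcomm.add_pow]
      rw [LinearMap.sum_apply]
      refine Finset.sum_congr rfl fun k _ => ?_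
      calc (N μ ^ k * (μ • (1 : Module.End ℂ V)) ^ (n - k) * (n.choose k : Module.End ℂ V)) x
          = μ ^ (n - k) • (n.choose k : ℂ) • ((N μ ^ k) x) := by
            rw [Module.End.mul_apply, Module.End.mul_apply, Module.End.natCast_apply,
              smul_pow, one_pow, LinearMap.smul_apply, Module.End.one_apply,
              ← Nat.cast_smul_eq_nsmul ℂ, map_smul, map_smul]
        _ = (n.choose k : ℂ) • μ ^ (n - k) • ((N μ ^ k) x) := smul_comm _ _ _
    rw [h2]
    refine sum_range_shrink (fun k hk => ?_) (fun k hk => ?_)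
    · rw [Nat.choose_eq_zero_of_lt (by omega)]
      simp
    · rw [hm_zero μ k hk x hx]
      simp
  -- the eigenvalue finset
  haveI : Algebra.IsIntegral ℂ (Module.End ℂ V) := Algebra.IsIntegral.of_finite ℂ _
  have hint : IsIntegral ℂ fl := Algebra.IsIntegral.isIntegral fl
  have hminne : minpoly ℂ fl ≠ 0 := minpoly.ne_zero hint
  set s : Finset ℂ := (minpoly ℂ fl).roots.toFinset with hs_def
  have hs_iff : ∀ μ : ℂ, fl.HasEigenvalue μ ↔ μ ∈ s := by
    intro μ
    rw [Module.End.hasEigenvalue_iff_isRoot, hs_def, Multiset.mem_toFinset,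
      Polynomial.mem_roots hminne]
  have hEbot : ∀ μ : ℂ, μ ∉ s → E μ = ⊥ := by
    intro μ hμ
    by_contra hne
    refine hμ ((hs_iff μ).1 ?_)
    have hgen : fl.genEigenspace μ (finrank ℂ V) ≠ ⊥ := by
      rw [← Module.End.maxGenEigenspace_eq_genEigenspace_finrank fl μ, hE_apply]
      exact hne
    exact Module.End.hasEigenvalue_of_hasGenEigenvalue (k := finrank ℂ V) hgen
  set t : Finset ℂ := s.filter (fun μ => ‖μ‖ = 1) with ht_def
  have ht_ne : t.Nonempty := by
    obtain ⟨μ0, hev, habs⟩ := hone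
    exact ⟨μ0, Finset.mem_filter.2 ⟨(hs_iff μ0).1 hev, habs⟩⟩
  set d : ℕ := t.sup (fun μ => m μ - 1) with hd_def
  have hd_le : ∀ μ ∈ t, m μ - 1 ≤ d := fun μ h => Finset.le_sup (f := fun μ => m μ - 1) h
  -- operator norms of endomorphisms
  set nrm : Module.End ℂ V → ℝ := fun A => ‖LinearMap.toContinuousLinearMap A‖ with hnrm_def
  have hnrm_nonneg : ∀ A, 0 ≤ nrm A := fun A => norm_nonneg _
  have hnrm_bound : ∀ (A : Module.End ℂ V) (x : V), ‖A x‖ ≤ nrm A * ‖x‖ := by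
    intro A x
    simpa using (LinearMap.toContinuousLinearMap A).le_opNorm x
  -- per-eigenvalue upper bounds
  have hDex : ∀ μ : ℂ, ∃ D : ℝ, 0 ≤ D ∧ (μ ∈ s →
      ∀ n : ℕ, 1 ≤ n → ∀ x ∈ E μ, ‖(fl ^ n) x‖ ≤ D * (n : ℝ) ^ d * ‖x‖) := by
    intro μ
    by_cases hμs : μ ∈ s
    swap
    · exact ⟨0, le_refl 0, fun h => absurd h hμs⟩
    by_cases habs : ‖μ‖ = 1
    · refine ⟨∑ k ∈ Finset.range (m μ), nrm (N μ ^ k),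
        Finset.sum_nonneg (fun k _ => hnrm_nonneg _), fun _ n hn x hx => ?_⟩
      have hnR : (1:ℝ) ≤ (n:ℝ) := by exact_mod_cast hn
      rw [hexpand μ n x hx]
      calc ‖∑ k ∈ Finset.range (m μ), (n.choose k : ℂ) • μ ^ (n - k) • ((N μ ^ k) x)‖
          ≤ ∑ k ∈ Finset.range (m μ), ‖(n.choose k : ℂ) • μ ^ (n - k) • ((N μ ^ k) x)‖ :=
            norm_sum_le _ _
        _ ≤ ∑ k ∈ Finset.range (m μ), nrm (N μ ^ k) * (n : ℝ) ^ d * ‖x‖ := ?_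
        _ = (∑ k ∈ Finset.range (m μ), nrm (N μ ^ k)) * (n : ℝ) ^ d * ‖x‖ := by
            rw [← Finset.sum_mul, ← Finset.sum_mul]
      refine Finset.sum_le_sum fun k hk => ?_
      have hklt : k < m μ := Finset.mem_range.1 hk
      have hk' : k ≤ d :=
        le_trans (by omega) (hd_le μ (Finset.mem_filter.2 ⟨hμs, habs⟩))
      have h1 : ‖(n.choose k : ℂ) • μ ^ (n - k) • ((N μ ^ k) x)‖
          = (n.choose k : ℝ) * ‖(N μ ^ k) x‖ := by
        rw [norm_smul, norm_smul, Complex.norm_natCast, norm_pow, habs, one_pow, one_mul]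
      have h2 : (n.choose k : ℝ) ≤ (n : ℝ) ^ d := by
        calc (n.choose k : ℝ) ≤ (n : ℝ) ^ k := by exact_mod_cast Nat.choose_le_pow n k
          _ ≤ (n : ℝ) ^ d := pow_le_pow_right₀ hnR hk'
      calc ‖(n.choose k : ℂ) • μ ^ (n - k) • ((N μ ^ k) x)‖
          = (n.choose k : ℝ) * ‖(N μ ^ k) x‖ := h1
        _ ≤ (n:ℝ)^d * (nrm (N μ ^ k) * ‖x‖) :=
            mul_le_mul h2 (hnrm_bound _ x) (norm_nonneg _) (by positivity)
        _ = nrm (N μ ^ k) * (n : ℝ) ^ d * ‖x‖ := by ring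
    · have hlt : ‖μ‖ < 1 := lt_of_le_of_ne (hle μ ((hs_iff μ).2 hμs)) habs
      have habs0 : (0:ℝ) ≤ ‖μ‖ := norm_nonneg μ
      set ρ : ℝ := (1 + ‖μ‖) / 2 with hρ_def
      have hρ0 : 0 < ρ := by rw [hρ_def]; linarith
      have hρ1 : ρ < 1 := by rw [hρ_def]; linarith
      have hμρ : ‖μ‖ ≤ ρ := by rw [hρ_def]; linarith
      have hBk : ∀ k : ℕ, ∃ Bk : ℝ, 0 ≤ Bk ∧
          ∀ n : ℕ, (n.choose k : ℝ) * (‖μ‖) ^ (n - k) ≤ Bk := by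
        intro k
        have htend := tendsto_pow_const_mul_const_pow_of_lt_one k (le_of_lt hρ0) hρ1
        obtain ⟨B0, hB0⟩ := htend.bddAbove_range
        have h00 : (0:ℝ) ≤ B0 := le_trans (by positivity : (0:ℝ) ≤ ((1:ℕ):ℝ)^k * ρ^1)
          (hB0 (Set.mem_range_self 1))
        refine ⟨B0 / ρ ^ k, div_nonneg h00 (by positivity), fun n => ?_⟩
        rcases lt_or_ge n k with h | h
        · rw [Nat.choose_eq_zero_of_lt h]
          simpa using div_nonneg h00 (le_of_lt (pow_pos hρ0 k))
        · have h1 : (n.choose k : ℝ) ≤ (n:ℝ)^k := by exact_mod_cast Nat.choose_le_pow n k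
          have h2 : (‖μ‖)^(n-k) ≤ ρ^(n-k) := pow_le_pow_left₀ habs0 hμρ _
          have h3 : ρ^(n-k) = ρ^n / ρ^k := pow_sub₀ ρ (ne_of_gt hρ0) h
          calc (n.choose k : ℝ) * (‖μ‖)^(n-k)
              ≤ (n:ℝ)^k * (ρ^n / ρ^k) := by
                rw [← h3]
                exact mul_le_mul h1 h2 (by positivity) (by positivity)
            _ = ((n:ℝ)^k * ρ^n) / ρ^k := by ring
            _ ≤ B0 / ρ^k := by
                gcongr
                exact hB0 (Set.mem_range_self n)
      choose Bk hBk0 hBkle using hBk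
      refine ⟨∑ k ∈ Finset.range (m μ), Bk k * nrm (N μ ^ k),
        Finset.sum_nonneg (fun k _ => mul_nonneg (hBk0 k) (hnrm_nonneg _)),
        fun _ n hn x hx => ?_⟩
      have hnR : (1:ℝ) ≤ (n:ℝ) := by exact_mod_cast hn
      have hnd1 : (1:ℝ) ≤ (n:ℝ)^d := one_le_pow₀ hnR
      have hD0 : (0:ℝ) ≤ ∑ k ∈ Finset.range (m μ), Bk k * nrm (N μ ^ k) :=
        Finset.sum_nonneg (fun k _ => mul_nonneg (hBk0 k) (hnrm_nonneg _))
      rw [hexpand μ n x hx]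
      calc ‖∑ k ∈ Finset.range (m μ), (n.choose k : ℂ) • μ ^ (n - k) • ((N μ ^ k) x)‖
          ≤ ∑ k ∈ Finset.range (m μ), ‖(n.choose k : ℂ) • μ ^ (n - k) • ((N μ ^ k) x)‖ :=
            norm_sum_le _ _
        _ ≤ ∑ k ∈ Finset.range (m μ), (Bk k * nrm (N μ ^ k)) * ‖x‖ := ?_
        _ = (∑ k ∈ Finset.range (m μ), Bk k * nrm (N μ ^ k)) * ‖x‖ := by
            rw [← Finset.sum_mul]
        _ ≤ (∑ k ∈ Finset.range (m μ), Bk k * nrm (N μ ^ k)) * (n:ℝ)^d * ‖x‖ := by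
            rw [mul_assoc]
            refine mul_le_mul_of_nonneg_left ?_ hD0
            calc ‖x‖ = 1 * ‖x‖ := (one_mul _).symm
              _ ≤ (n:ℝ)^d * ‖x‖ := mul_le_mul_of_nonneg_right hnd1 (norm_nonneg _)
      refine Finset.sum_le_sum fun k _ => ?_
      have h1 : ‖(n.choose k : ℂ) • μ ^ (n - k) • ((N μ ^ k) x)‖
          = ((n.choose k : ℝ) * (‖μ‖) ^ (n - k)) * ‖(N μ ^ k) x‖ := by
        rw [norm_smul, norm_smul, Complex.norm_natCast, norm_pow]
        ring
      rw [h1]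
      calc ((n.choose k : ℝ) * (‖μ‖) ^ (n - k)) * ‖(N μ ^ k) x‖
          ≤ Bk k * ‖(N μ ^ k) x‖ :=
            mul_le_mul_of_nonneg_right (hBkle k n) (norm_nonneg _)
        _ ≤ Bk k * (nrm (N μ ^ k) * ‖x‖) :=
            mul_le_mul_of_nonneg_left (hnrm_bound _ x) (hBk0 k)
        _ = (Bk k * nrm (N μ ^ k)) * ‖x‖ := by ring
  choose D hD0 hDle using hDex
  -- section of the sum map from the product of the generalized eigenspaces
  set Φ : (∀ μ : {μ : ℂ // μ ∈ s}, E μ.1) →ₗ[ℂ] V :=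
    LinearMap.lsum ℂ (fun μ : {μ : ℂ // μ ∈ s} => E μ.1) ℂ (fun μ => (E μ.1).subtype)
    with hΦ_def
  have hΦ_apply : ∀ p, Φ p = ∑ μ : {μ : ℂ // μ ∈ s}, ((p μ : V)) := by
    intro p
    simp [hΦ_def, LinearMap.lsum_apply]
  have hΦ_surj : LinearMap.range Φ = ⊤ := by
    rw [eq_top_iff, ← Module.End.iSup_maxGenEigenspace_eq_top fl]
    refine iSup_le fun μ => ?_
    by_cases hμs : μ ∈ s
    · rw [hE_apply]
      intro x hx
      refine ⟨Pi.single ⟨μ, hμs⟩ ⟨x, hx⟩, ?_⟩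
      rw [hΦ_apply]
      rw [Finset.sum_eq_single (⟨μ, hμs⟩ : {μ : ℂ // μ ∈ s})]
      · simp
      · intro b _ hb
        rw [Pi.single_eq_of_ne hb]
        rfl
      · intro h
        exact absurd (Finset.mem_univ _) h
    · rw [hE_apply, hEbot μ hμs]
      exact bot_le
  obtain ⟨g, hg⟩ := Φ.exists_rightInverse_of_surjective hΦ_surj
  have hg_apply : ∀ x : V, Φ (g x) = x := by
    intro x
    have := LinearMap.ext_iff.1 hg x
    simpa using this
  set K : ℝ := ‖LinearMap.toContinuousLinearMap g‖ with hK_def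
  have hK0 : 0 ≤ K := hK_def ▸ ContinuousLinearMap.opNorm_nonneg _
  have hgx : ∀ (x : V) (μ : {μ : ℂ // μ ∈ s}), ‖(g x μ : V)‖ ≤ K * ‖x‖ := by
    intro x μ
    have h2 : ‖g x μ‖ ≤ ‖g x‖ := norm_le_pi_norm (g x) μ
    have h3 : ‖g x‖ ≤ K * ‖x‖ := by
      simpa using (LinearMap.toContinuousLinearMap g).le_opNorm x
    exact le_trans h2 h3
  have hsum0 : (0:ℝ) ≤ ∑ μ : {μ : ℂ // μ ∈ s}, D μ.1 :=
    Finset.sum_nonneg fun μ _ => hD0 μ.1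
  set c₂ : ℝ := (∑ μ : {μ : ℂ // μ ∈ s}, D μ.1) * K + 1 with hc₂_def
  have hc₂0 : 0 < c₂ := by
    have : (0:ℝ) ≤ (∑ μ : {μ : ℂ // μ ∈ s}, D μ.1) * K := mul_nonneg hsum0 hK0
    rw [hc₂_def]; linarith
  have hupper : ∀ n : ℕ, 1 ≤ n → ‖f ^ n‖ ≤ c₂ * (n:ℝ)^d := by
    intro n hn
    have hnd0 : (0:ℝ) ≤ (n:ℝ)^d := by positivity
    refine ContinuousLinearMap.opNorm_le_bound _ (mul_nonneg (le_of_lt hc₂0) hnd0) fun x => ?_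
    rw [happ n x]
    have hx : (fl ^ n) x = ∑ μ : {μ : ℂ // μ ∈ s}, (fl ^ n) ((g x μ : V)) := by
      conv_lhs => rw [← hg_apply x, hΦ_apply]
      rw [map_sum]
    rw [hx]
    calc ‖∑ μ : {μ : ℂ // μ ∈ s}, (fl ^ n) ((g x μ : V))‖
        ≤ ∑ μ : {μ : ℂ // μ ∈ s}, ‖(fl ^ n) ((g x μ : V))‖ := norm_sum_le _ _
      _ ≤ ∑ μ : {μ : ℂ // μ ∈ s}, D μ.1 * ((n:ℝ)^d * (K * ‖x‖)) := by
          refine Finset.sum_le_sum fun μ _ => ?_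
          calc ‖(fl ^ n) ((g x μ : V))‖
              ≤ D μ.1 * (n:ℝ)^d * ‖(g x μ : V)‖ :=
                hDle μ.1 μ.2 n hn (g x μ : V) (g x μ).2
            _ ≤ D μ.1 * (n:ℝ)^d * (K * ‖x‖) :=
                mul_le_mul_of_nonneg_left (hgx x μ) (mul_nonneg (hD0 μ.1) hnd0)
            _ = D μ.1 * ((n:ℝ)^d * (K * ‖x‖)) := by ring
      _ = (∑ μ : {μ : ℂ // μ ∈ s}, D μ.1) * ((n:ℝ)^d * (K * ‖x‖)) := by
          rw [← Finset.sum_mul]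
      _ = ((∑ μ : {μ : ℂ // μ ∈ s}, D μ.1) * K) * ((n:ℝ)^d * ‖x‖) := by ring
      _ ≤ c₂ * ((n:ℝ)^d * ‖x‖) := by
          refine mul_le_mul_of_nonneg_right ?_ (mul_nonneg hnd0 (norm_nonneg _))
          rw [hc₂_def]; linarith
      _ = c₂ * (n:ℝ)^d * ‖x‖ := by ring
  -- lower bound: pick a unit eigenvalue of maximal nilpotency index
  obtain ⟨μs, hμst, hd_eq⟩ := Finset.exists_mem_eq_sup t ht_ne (fun μ => m μ - 1)
  have hd_eq' : d = m μs - 1 := hd_eq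
  have hμss : μs ∈ s := (Finset.mem_filter.1 hμst).1
  have habs_s : ‖μs‖ = 1 := (Finset.mem_filter.1 hμst).2
  have hμs0 : μs ≠ 0 := by
    intro h
    rw [h] at habs_s
    simp at habs_s
  have hEne : E μs ≠ ⊥ := by
    have hev : fl.HasEigenvalue μs := (hs_iff μs).2 hμss
    obtain ⟨v, hv⟩ := hev.exists_hasEigenvector
    have hv1 : fl v = μs • v := hv.apply_eq_smul
    refine (Submodule.ne_bot_iff _).2 ⟨v, ?_, hv.2⟩
    have hNv : N μs v = 0 := by
      simp only [hN_def]
      rw [LinearMap.sub_apply, LinearMap.smul_apply, Module.End.one_apply, hv1, sub_self]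
    refine (Module.End.mem_maxGenEigenspace fl μs v).2 ⟨1, ?_⟩
    rw [pow_one]
    exact hNv
  have hm1 : 1 ≤ m μs := by
    rcases Nat.eq_zero_or_pos (m μs) with h0 | h
    · exfalso
      apply hEne
      rw [Submodule.eq_bot_iff]
      intro x hx
      have := hm_spec μs x hx
      rw [h0, pow_zero, Module.End.one_apply] at this
      exact this
    · exact h
  have hm_eq : m μs = d + 1 := by omega
  have hvex : ∃ v ∈ E μs, (N μs ^ d) v ≠ 0 := by
    have hmin := hm_min μs d (by omega)
    push_neg at hmin
    obtain ⟨v, hv1, hv2⟩ := hmin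
    exact ⟨v, hv1, hv2⟩
  obtain ⟨v, hvE, hvne⟩ := hvex
  have hv0 : v ≠ 0 := by
    intro h
    apply hvne
    rw [h, map_zero]
  have hvpos : 0 < ‖v‖ := norm_pos_iff.2 hv0
  set a : ℝ := ‖(N μs ^ d) v‖ with ha_def
  have ha : 0 < a := norm_pos_iff.2 hvne
  set B : ℝ := ∑ k ∈ Finset.range d, ‖(N μs ^ k) v‖ with hB_def
  have hB0 : 0 ≤ B := Finset.sum_nonneg fun k _ => norm_nonneg _
  have hf0 : (0:ℝ) < (Nat.factorial d : ℝ) := by exact_mod_cast Nat.factorial_pos d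
  set ε : ℝ := a / (2 ^ (d + 1) * (Nat.factorial d : ℝ)) with hε_def
  have hε0 : 0 < ε := div_pos ha (by positivity)
  set n₁ : ℕ := max (max (2 * d) ⌈B / ε⌉₊) 1 with hn₁_def
  have hasymp : ∀ n : ℕ, n₁ ≤ n → ε * (n:ℝ)^d ≤ ‖(fl ^ n) v‖ := by
    intro n hn
    have hn1 : 1 ≤ n := le_trans (le_max_right _ 1) hn
    have h2d : 2 * d ≤ n := le_trans (le_trans (le_max_left _ _) (le_max_left _ 1)) hn
    have hceil : ⌈B / ε⌉₊ ≤ n := le_trans (le_trans (le_max_right _ _) (le_max_left _ 1)) hn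
    have hnR : (1:ℝ) ≤ (n:ℝ) := by exact_mod_cast hn1
    have hnR0 : (0:ℝ) < (n:ℝ) := by linarith
    have hBn : B / ε ≤ (n:ℝ) := le_trans (Nat.le_ceil _) (by exact_mod_cast hceil)
    have hBn' : B ≤ ε * (n:ℝ) := by
      rw [div_le_iff₀ hε0] at hBn
      linarith
    have hexp := hexpand μs n v hvE
    rw [hm_eq, Finset.sum_range_succ] at hexp
    set td : V := (n.choose d : ℂ) • μs ^ (n - d) • ((N μs ^ d) v) with htd_def
    set ts : V := ∑ k ∈ Finset.range d, (n.choose k : ℂ) • μs ^ (n - k) • ((N μs ^ k) v)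
      with hts_def
    have hlow1 : ‖td‖ - ‖ts‖ ≤ ‖(fl ^ n) v‖ := by
      rw [hexp]
      have h1 : ‖td‖ ≤ ‖ts + td‖ + ‖ts‖ := by
        calc ‖td‖ = ‖(ts + td) - ts‖ := by rw [add_sub_cancel_left]
          _ ≤ ‖ts + td‖ + ‖ts‖ := norm_sub_le _ _
      linarith
    have htd_norm : ‖td‖ = (n.choose d : ℝ) * a := by
      rw [htd_def, norm_smul, norm_smul, Complex.norm_natCast, norm_pow,
        habs_s, one_pow, one_mul, ha_def]
    have hts_norm : ‖ts‖ ≤ B * (n:ℝ)^d / n := by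
      rw [hts_def]
      have step : ∀ k ∈ Finset.range d,
          ‖(n.choose k : ℂ) • μs ^ (n - k) • ((N μs ^ k) v)‖
            ≤ ‖(N μs ^ k) v‖ * ((n:ℝ)^d / n) := by
        intro k hk
        have hkd : k < d := Finset.mem_range.1 hk
        have h1 : ‖(n.choose k : ℂ) • μs ^ (n - k) • ((N μs ^ k) v)‖
            = (n.choose k : ℝ) * ‖(N μs ^ k) v‖ := by
          rw [norm_smul, norm_smul, Complex.norm_natCast, norm_pow, habs_s, one_pow, one_mul]
        rw [h1]
        have h2 : (n.choose k : ℝ) ≤ (n:ℝ)^d / n := by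
          rw [le_div_iff₀ hnR0]
          calc (n.choose k : ℝ) * n ≤ (n:ℝ)^k * n := by
                have hc : (n.choose k : ℝ) ≤ (n:ℝ)^k := by
                  exact_mod_cast Nat.choose_le_pow n k
                exact mul_le_mul_of_nonneg_right hc (le_of_lt hnR0)
            _ = (n:ℝ)^(k+1) := by rw [pow_succ]
            _ ≤ (n:ℝ)^d := pow_le_pow_right₀ hnR (by omega)
        calc (n.choose k : ℝ) * ‖(N μs ^ k) v‖
            ≤ ((n:ℝ)^d / n) * ‖(N μs ^ k) v‖ :=
              mul_le_mul_of_nonneg_right h2 (norm_nonneg _)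
          _ = ‖(N μs ^ k) v‖ * ((n:ℝ)^d / n) := by ring
      calc ‖∑ k ∈ Finset.range d, (n.choose k : ℂ) • μs ^ (n - k) • ((N μs ^ k) v)‖
          ≤ ∑ k ∈ Finset.range d, ‖(n.choose k : ℂ) • μs ^ (n - k) • ((N μs ^ k) v)‖ :=
            norm_sum_le _ _
        _ ≤ ∑ k ∈ Finset.range d, ‖(N μs ^ k) v‖ * ((n:ℝ)^d / n) :=
            Finset.sum_le_sum step
        _ = B * ((n:ℝ)^d / n) := by rw [← Finset.sum_mul]
        _ = B * (n:ℝ)^d / n := by ring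
    have hchoose : (n:ℝ)^d / (2^d * (Nat.factorial d : ℝ)) ≤ (n.choose d : ℝ) := by
      have h1 : (((n + 1 - d : ℕ) : ℝ)) ^ d / (Nat.factorial d : ℝ) ≤ (n.choose d : ℝ) := by
        have := Nat.pow_le_choose (α := ℝ) d n
        push_cast at this ⊢
        convert this using 2
      have h2 : ((n:ℝ)/2) ≤ ((n + 1 - d : ℕ) : ℝ) := by
        have hd_le_n : d ≤ n := by omega
        have hcast : ((n - d : ℕ) : ℝ) = (n:ℝ) - (d:ℝ) := Nat.cast_sub hd_le_n
        have hmono : (n - d : ℕ) ≤ (n + 1 - d : ℕ) := by omega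
        have hdhalf : (d:ℝ) ≤ (n:ℝ)/2 := by
          have h2d' : ((2*d : ℕ):ℝ) ≤ (n:ℝ) := by exact_mod_cast h2d
          push_cast at h2d'
          linarith
        calc (n:ℝ)/2 ≤ (n:ℝ) - (d:ℝ) := by linarith
          _ = ((n - d : ℕ):ℝ) := hcast.symm
          _ ≤ ((n + 1 - d : ℕ):ℝ) := by exact_mod_cast hmono
      calc (n:ℝ)^d / (2^d * (Nat.factorial d : ℝ))
          = ((n:ℝ)/2)^d / (Nat.factorial d : ℝ) := by
            rw [div_pow]; ring
        _ ≤ (((n + 1 - d : ℕ):ℝ))^d / (Nat.factorial d : ℝ) := by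
            gcongr
        _ ≤ (n.choose d : ℝ) := h1
    have h2ε : (n:ℝ)^d / (2^d * (Nat.factorial d : ℝ)) * a = 2 * ε * (n:ℝ)^d := by
      rw [hε_def]
      field_simp
      ring
    have hc : 2 * ε * (n:ℝ)^d ≤ (n.choose d : ℝ) * a := by
      rw [← h2ε]
      exact mul_le_mul_of_nonneg_right hchoose (le_of_lt ha)
    have hB₂ : B * (n:ℝ)^d / n ≤ ε * (n:ℝ)^d := by
      have hdivn : B / n ≤ ε := by
        rw [div_le_iff₀ hnR0]
        linarith
      calc B * (n:ℝ)^d / n = (B/n) * (n:ℝ)^d := by ring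
        _ ≤ ε * (n:ℝ)^d := mul_le_mul_of_nonneg_right hdivn (by positivity)
    calc ε * (n:ℝ)^d = 2 * ε * (n:ℝ)^d - ε * (n:ℝ)^d := by ring
      _ ≤ (n.choose d : ℝ) * a - B * (n:ℝ)^d / n := by linarith
      _ ≤ ‖td‖ - ‖ts‖ := by
          rw [htd_norm]
          linarith
      _ ≤ ‖(fl ^ n) v‖ := hlow1
  -- positivity of all the norms
  have hNswap : ∀ x ∈ E μs, fl x = 0 → x = 0 := by
    intro x hx hfx
    have hNx : N μs x = (-μs) • x := by
      rw [hN_def]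
      rw [LinearMap.sub_apply, LinearMap.smul_apply, Module.End.one_apply, hfx, zero_sub,
        neg_smul]
    have hNk : ∀ k : ℕ, (N μs ^ k) x = ((-μs) ^ k) • x := by
      intro k
      induction k with
      | zero => simp
      | succ k ih =>
        rw [pow_succ, Module.End.mul_apply, hNx, map_smul, ih, smul_smul, ← pow_succ']
    have h0 := hm_spec μs x hx
    rw [hNk (m μs)] at h0
    have hne : ((-μs) ^ (m μs)) ≠ 0 := pow_ne_zero _ (neg_ne_zero.2 hμs0)
    exact (smul_eq_zero.1 h0).resolve_left hne
  have hEinv : ∀ x ∈ E μs, fl x ∈ E μs := by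
    intro x hx
    exact Module.End.mapsTo_maxGenEigenspace_of_comm (Commute.refl fl) μs hx
  have hflnv : ∀ n : ℕ, (fl ^ n) v ∈ E μs ∧ (fl ^ n) v ≠ 0 := by
    intro n
    induction n with
    | zero => exact ⟨by simpa using hvE, by simpa using hv0⟩
    | succ n ih =>
      have hmem : (fl ^ (n+1)) v = fl ((fl ^ n) v) := by
        rw [pow_succ', Module.End.mul_apply]
      constructor
      · rw [hmem]
        exact hEinv _ ih.1
      · rw [hmem]
        intro h
        exact ih.2 (hNswap _ ih.1 h)
  have hnormpos : ∀ n : ℕ, 0 < ‖f ^ n‖ := by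
    intro n
    have h1 : (f ^ n) v ≠ 0 := by
      rw [happ]
      exact (hflnv n).2
    have hf0' : f ^ n ≠ 0 := by
      intro h
      apply h1
      rw [h]
      rfl
    exact norm_pos_iff.2 hf0'
  -- minimum over the small exponents
  set ε' : ℝ := ε / ‖v‖ with hε'_def
  have hε'0 : 0 < ε' := div_pos hε0 hvpos
  set Fs : Finset ℝ := (Finset.Icc 1 n₁).image (fun n : ℕ => ‖f ^ n‖ / (n:ℝ)^d) with hFs_def
  have hFs_ne : Fs.Nonempty := by
    refine ⟨‖f ^ 1‖ / ((1:ℕ):ℝ)^d, Finset.mem_image.2 ⟨1, ?_, rfl⟩⟩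
    exact Finset.mem_Icc.2 ⟨le_refl 1, le_max_right _ 1⟩
  set cmin : ℝ := Fs.min' hFs_ne with hcmin_def
  have hcmin_pos : 0 < cmin := by
    obtain ⟨n0, hn0, heq⟩ := Finset.mem_image.1 (Fs.min'_mem hFs_ne)
    rw [hcmin_def, ← heq]
    have hn01 : 1 ≤ n0 := (Finset.mem_Icc.1 hn0).1
    have hn0R : (0:ℝ) < (n0:ℝ) := by exact_mod_cast hn01
    exact div_pos (hnormpos n0) (pow_pos hn0R d)
  refine ⟨d, min ε' cmin, c₂, lt_min hε'0 hcmin_pos, hc₂0, fun n hn => ⟨?_, hupper n hn⟩⟩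
  by_cases hcase : n ≤ n₁
  · have hmem : ‖f ^ n‖ / (n:ℝ)^d ∈ Fs :=
      Finset.mem_image.2 ⟨n, Finset.mem_Icc.2 ⟨hn, hcase⟩, rfl⟩
    have h1 : cmin ≤ ‖f ^ n‖ / (n:ℝ)^d := Finset.min'_le _ _ hmem
    have hnp : (0:ℝ) < (n:ℝ)^d := pow_pos (by exact_mod_cast hn) d
    calc min ε' cmin * (n:ℝ)^d ≤ (‖f ^ n‖/(n:ℝ)^d) * (n:ℝ)^d :=
        mul_le_mul_of_nonneg_right (le_trans (min_le_right _ _) h1) (le_of_lt hnp)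
      _ = ‖f ^ n‖ := div_mul_cancel₀ _ (ne_of_gt hnp)
  · push_neg at hcase
    have h1 : ε * (n:ℝ)^d ≤ ‖(fl ^ n) v‖ := hasymp n (le_of_lt hcase)
    have h2 : ‖(fl ^ n) v‖ ≤ ‖f ^ n‖ * ‖v‖ := by
      rw [← happ]
      exact (f ^ n).le_opNorm v
    have h3 : ε' * (n:ℝ)^d ≤ ‖f ^ n‖ := by
      rw [hε'_def, div_mul_eq_mul_div, div_le_iff₀ hvpos]
      calc ε * (n:ℝ)^d ≤ ‖(fl ^ n) v‖ := h1
        _ ≤ ‖f ^ n‖ * ‖v‖ := h2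
    calc min ε' cmin * (n:ℝ)^d ≤ ε' * (n:ℝ)^d :=
        mul_le_mul_of_nonneg_right (min_le_left _ _) (by positivity)
      _ ≤ ‖f ^ n‖ := h3

/-- Let `W` be a nonzero finite-dimensional real normed vector space and
`T : W → W` a (continuous) linear map all of whose complexified eigenvalues have modulus
at most `1`, at least one of them having modulus exactly `1`.  Then there are `d : ℕ` and
constants `0 < c₁ ≤ c₂` such that `c₁ * n^d ≤ ‖Tⁿ‖ ≤ c₂ * n^d` for all `n ≥ 1`. -/
theorem polynomial_growth_of_spectral_radius_one
    {W : Type*} [NormedAddCommGroup W] [NormedSpace ℝ W] [FiniteDimensional ℝ W]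
    [Nontrivial W]
    (T : W →L[ℝ] W)
    (hle : ∀ μ : ℂ,
      Module.End.HasEigenvalue (LinearMap.baseChange ℂ (T : W →ₗ[ℝ] W)) μ →
        ‖μ‖ ≤ 1)
    (hone : ∃ μ : ℂ,
      Module.End.HasEigenvalue (LinearMap.baseChange ℂ (T : W →ₗ[ℝ] W)) μ ∧
        ‖μ‖ = 1) :
    ∃ (d : ℕ) (c₁ c₂ : ℝ), 0 < c₁ ∧ c₁ ≤ c₂ ∧
      ∀ n : ℕ, 1 ≤ n →
        c₁ * (n : ℝ) ^ d ≤ ‖T ^ n‖ ∧ ‖T ^ n‖ ≤ c₂ * (n : ℝ) ^ d := by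
  classical
  set Tl : W →ₗ[ℝ] W := (T : W →ₗ[ℝ] W) with hTl_def
  set mdim : ℕ := finrank ℂ (TensorProduct ℝ ℂ W) with hmdim_def
  set g : TensorProduct ℝ ℂ W ≃ₗ[ℂ] (Fin mdim → ℂ) :=
    (Module.finBasis ℂ (TensorProduct ℝ ℂ W)).equivFun with hg_def
  set Sl : Module.End ℂ (Fin mdim → ℂ) := g.conj (Tl.baseChange ℂ) with hSl_def
  set S : (Fin mdim → ℂ) →L[ℂ] (Fin mdim → ℂ) := LinearMap.toContinuousLinearMap Sl
    with hS_def
  have hS_coe : (S : (Fin mdim → ℂ) →ₗ[ℂ] (Fin mdim → ℂ)) = Sl :=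
    LinearMap.coe_toContinuousLinearMap Sl
  -- hypotheses for the core theorem
  have hle' : ∀ μ : ℂ,
      Module.End.HasEigenvalue (S : (Fin mdim → ℂ) →ₗ[ℂ] (Fin mdim → ℂ)) μ →
        ‖μ‖ ≤ 1 := by
    intro μ h
    rw [hS_coe, hSl_def] at h
    have h2 := hasEigen_conj g.symm _ μ h
    rw [conj_symm_conj] at h2
    exact hle μ h2
  have hone' : ∃ μ : ℂ,
      Module.End.HasEigenvalue (S : (Fin mdim → ℂ) →ₗ[ℂ] (Fin mdim → ℂ)) μ ∧
        ‖μ‖ = 1 := by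
    obtain ⟨μ, hev, habs⟩ := hone
    refine ⟨μ, ?_, habs⟩
    rw [hS_coe, hSl_def]
    exact hasEigen_conj g _ μ hev
  obtain ⟨d, c₁, c₂, hc₁, hc₂, hbd⟩ := core_growth S hle' hone'
  -- the comparison map
  set φ₁ : (W →L[ℝ] W) →ₗ[ℝ] (W →ₗ[ℝ] W) := ContinuousLinearMap.coeLM ℝ with hφ₁_def
  set φ₂ : (W →ₗ[ℝ] W) →ₗ[ℝ] (TensorProduct ℝ ℂ W →ₗ[ℂ] TensorProduct ℝ ℂ W) :=
    LinearMap.baseChangeHom ℝ ℂ W W with hφ₂_def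
  set φ₃ : (TensorProduct ℝ ℂ W →ₗ[ℂ] TensorProduct ℝ ℂ W) →ₗ[ℝ]
      ((Fin mdim → ℂ) →ₗ[ℂ] (Fin mdim → ℂ)) :=
    (g.conj.restrictScalars ℝ).toLinearMap with hφ₃_def
  set φ₄ : ((Fin mdim → ℂ) →ₗ[ℂ] (Fin mdim → ℂ)) →ₗ[ℝ]
      ((Fin mdim → ℂ) →L[ℂ] (Fin mdim → ℂ)) :=
    ((LinearMap.toContinuousLinearMap (𝕜 := ℂ) (E := Fin mdim → ℂ)
      (F' := Fin mdim → ℂ)).restrictScalars ℝ).toLinearMap with hφ₄_def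
  set φ : (W →L[ℝ] W) →ₗ[ℝ] ((Fin mdim → ℂ) →L[ℂ] (Fin mdim → ℂ)) :=
    φ₄ ∘ₗ φ₃ ∘ₗ φ₂ ∘ₗ φ₁ with hφ_def
  have hφ_apply : ∀ A : W →L[ℝ] W,
      φ A = LinearMap.toContinuousLinearMap (g.conj ((A : W →ₗ[ℝ] W).baseChange ℂ)) :=
    fun A => rfl
  have hφ_inj : Function.Injective φ := by
    intro A B h
    rw [hφ_apply, hφ_apply] at h
    have h1 : g.conj ((A : W →ₗ[ℝ] W).baseChange ℂ) = g.conj ((B : W →ₗ[ℝ] W).baseChange ℂ) :=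
      LinearMap.toContinuousLinearMap.injective h
    have h2 : (A : W →ₗ[ℝ] W).baseChange ℂ = (B : W →ₗ[ℝ] W).baseChange ℂ :=
      g.conj.injective h1
    have h3 : (A : W →ₗ[ℝ] W) = (B : W →ₗ[ℝ] W) := baseChange_injective W h2
    exact ContinuousLinearMap.coe_injective h3
  -- φ intertwines powers
  have hcoe_pow : ∀ n : ℕ, ((T ^ n : W →L[ℝ] W) : W →ₗ[ℝ] W) = Tl ^ n := by
    intro n
    refine LinearMap.ext fun x => ?_
    have h1 : ((T ^ n : W →L[ℝ] W) : W →ₗ[ℝ] W) x = (T ^ n) x := rfl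
    rw [h1]
    have h2 : (T ^ n) x = (⇑T)^[n] x := by
      rw [FunLike.coe_pow_eq_iterate]
    have h3 : (Tl ^ n) x = (⇑Tl)^[n] x := Module.End.pow_apply Tl n x
    rw [h2, h3]
    rfl
  have htoCLM_pow : ∀ k : ℕ, LinearMap.toContinuousLinearMap (Sl ^ k) = S ^ k := by
    intro k
    induction k with
    | zero => exact ContinuousLinearMap.ext fun x => rfl
    | succ k ih =>
      refine ContinuousLinearMap.ext fun x => ?_
      rw [pow_succ, pow_succ, ContinuousLinearMap.mul_apply, ← ih]
      rfl
  have hφ_powS : ∀ n : ℕ, φ (T ^ n) = S ^ n := by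
    intro n
    rw [hφ_apply, hcoe_pow n, LinearMap.baseChange_pow, conj_pow_eq, ← hSl_def,
      htoCLM_pow n]
  -- norm comparison constants
  obtain ⟨Ka, hKa0, hKa⟩ := φ.exists_antilipschitzWith (LinearMap.ker_eq_bot.2 hφ_inj)
  have hKaR : (0:ℝ) < (Ka : ℝ) := by exact_mod_cast hKa0
  have hlow : ∀ A : W →L[ℝ] W, ‖A‖ ≤ (Ka : ℝ) * ‖φ A‖ := by
    intro A
    have := hKa.le_mul_dist A 0
    simpa [dist_eq_norm, map_zero] using this
  set Kc : ℝ := ‖LinearMap.toContinuousLinearMap φ‖ + 1 with hKc_def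
  have hKc0 : 0 < Kc := by positivity
  have hup : ∀ A : W →L[ℝ] W, ‖φ A‖ ≤ Kc * ‖A‖ := by
    intro A
    have h1 : ‖φ A‖ ≤ ‖LinearMap.toContinuousLinearMap φ‖ * ‖A‖ := by
      simpa using (LinearMap.toContinuousLinearMap φ).le_opNorm A
    have h2 : ‖LinearMap.toContinuousLinearMap φ‖ * ‖A‖ ≤ Kc * ‖A‖ := by
      refine mul_le_mul_of_nonneg_right ?_ (norm_nonneg _)
      rw [hKc_def]
      linarith
    linarith
  refine ⟨d, c₁ / Kc, max ((Ka : ℝ) * c₂) (c₁ / Kc), div_pos hc₁ hKc0, le_max_right _ _,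
    fun n hn => ⟨?_, ?_⟩⟩
  · have h1 := (hbd n hn).1
    have h2 : ‖S ^ n‖ ≤ Kc * ‖T ^ n‖ := by
      rw [← hφ_powS n]
      exact hup _
    rw [div_mul_eq_mul_div, div_le_iff₀ hKc0]
    calc c₁ * (n:ℝ)^d ≤ ‖S ^ n‖ := h1
      _ ≤ Kc * ‖T ^ n‖ := h2
      _ = ‖T ^ n‖ * Kc := mul_comm _ _
  · have h1 := (hbd n hn).2
    have h2 : ‖T ^ n‖ ≤ (Ka : ℝ) * ‖S ^ n‖ := by
      rw [← hφ_powS n]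
      exact hlow _
    calc ‖T ^ n‖ ≤ (Ka : ℝ) * ‖S ^ n‖ := h2
      _ ≤ (Ka : ℝ) * (c₂ * (n:ℝ)^d) := mul_le_mul_of_nonneg_left h1 (le_of_lt hKaR)
      _ = ((Ka : ℝ) * c₂) * (n:ℝ)^d := by ring
      _ ≤ max ((Ka : ℝ) * c₂) (c₁ / Kc) * (n:ℝ)^d :=
          mul_le_mul_of_nonneg_right (le_max_left _ _) (by positivity)
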